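/- Let n be even and let F_1 and F_2 be graphs on a common vertex set of size n, both of which have a perfect matching (a 1-factor). Then the simultaneous domination number of F_1 and F_2 is at most n/2. Moreover, if the maximum of the domination numbers γ(F_1) and γ(F_2) equals n/2, then the simultaneous domination number of F_1 and F_2 equals exactly n/2. -/

import Mathlib

/-- The simultaneous domination number of factors `F 0, …, F (k-1)` on a common
finite vertex set: the minimum cardinality of a set `S` that is a dominating set
in every factor. -/
noncomputable def simDomNum {V : Type*} [Fintype V] {k : ℕ}
    (F : Fin k → SimpleGraph V) : ℕ :=
  sInf {m | ∃ S : Finset V, (∀ i, ∀ v ∉ S, ∃ u ∈ S, (F i).Adj v u) ∧ S.card = m}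

/-- The domination number of a graph. -/
noncomputable def domNum {V : Type*} [Fintype V] (F : SimpleGraph V) : ℕ :=
  sInf {m | ∃ S : Finset V, (∀ v ∉ S, ∃ u ∈ S, F.Adj v u) ∧ S.card = m}

lemma exists_split {V : Type*} [Fintype V] (f g : Equiv.Perm V)
    (hf : ∀ v, f (f v) = v) (hg : ∀ v, g (g v) = v)
    (hf' : ∀ v, f v ≠ v) (hg' : ∀ v, g v ≠ v) :
    ∃ S : Finset V, (∀ v, v ∈ S ↔ f v ∉ S) ∧ (∀ v, v ∈ S ↔ g v ∉ S) := by
  classical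
  set τ : Equiv.Perm V := g * f with hτdef
  have hff : f * f = 1 := by ext v; simp [Equiv.Perm.mul_apply, hf]
  have hgg : g * g = 1 := by ext v; simp [Equiv.Perm.mul_apply, hg]
  have hfinv : f⁻¹ = f := inv_eq_of_mul_eq_one_right hff
  have hginv : g⁻¹ = g := inv_eq_of_mul_eq_one_right hgg
  have hconj1 : f * τ * f⁻¹ = τ⁻¹ := by
    rw [hfinv, hτdef, mul_inv_rev, hfinv, hginv]
    calc f * (g * f) * f = f * g * (f * f) := by group
    _ = f * g := by rw [hff, mul_one]
  have hconj : ∀ k : ℤ, f * τ ^ k = τ ^ (-k) * f := by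
    intro k
    have h1 : f * τ ^ k * f⁻¹ = (f * τ * f⁻¹) ^ k := by
      have := map_zpow (MulAut.conj f) τ k
      simpa [MulAut.conj_apply] using this
    rw [hconj1, inv_zpow, ← zpow_neg] at h1
    have h2 : f * τ ^ k * f⁻¹ * f = τ ^ (-k) * f := by rw [h1]
    rwa [hfinv, mul_assoc, hff, mul_one] at h2
  have hconjv : ∀ (v : V) (k : ℤ), f ((τ ^ k) v) = (τ ^ (-k)) (f v) := by
    intro v k
    have := congrFun (congrArg (fun p : Equiv.Perm V => (p : V → V)) (hconj k)) v
    simpa [Equiv.Perm.mul_apply] using this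
  have happ : ∀ (a b : ℤ) (v : V), (τ ^ a) ((τ ^ b) v) = (τ ^ (a + b)) v := by
    intro a b v
    rw [← Equiv.Perm.mul_apply, ← zpow_add]
  have hgτf : ∀ v : V, g v = τ (f v) := by
    intro v
    have : τ (f v) = g (f (f v)) := by simp [hτdef, Equiv.Perm.mul_apply]
    rw [this, hf]
  -- key lemma: f v is never in the ⟨τ⟩-orbit of v
  have key1 : ∀ (v : V) (k : ℤ), f v ≠ (τ ^ k) v := by
    intro v k h
    rcases Int.even_or_odd k with ⟨j, hj⟩ | ⟨j, hj⟩
    · apply hf' ((τ ^ j) v)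
      rw [hconjv, h, happ, show -j + k = j by omega]
    · apply hg' ((τ ^ (j + 1)) v)
      have h1 : f ((τ ^ (j + 1)) v) = (τ ^ (-(j + 1) + k)) v := by
        rw [hconjv, h, happ]
      rw [hgτf, h1,
        show τ ((τ ^ (-(j + 1) + k)) v) = (τ ^ (1 : ℤ)) ((τ ^ (-(j + 1) + k)) v) by
          rw [zpow_one],
        happ, show (1 : ℤ) + (-(j + 1) + k) = j + 1 by omega]
  -- orbit equivalence
  let s : Setoid V := ⟨fun v w => ∃ k : ℤ, w = (τ ^ k) v, by
    constructor
    · exact fun v => ⟨0, by simp⟩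
    · rintro a b ⟨k, rfl⟩
      exact ⟨-k, by rw [happ]; simp⟩
    · rintro a b c ⟨k, rfl⟩ ⟨l, rfl⟩
      exact ⟨l + k, by rw [happ]⟩⟩
  let Q := Quotient s
  have hresp : ∀ a b : V, s.r a b → s.r (f a) (f b) := by
    rintro a b ⟨k, rfl⟩
    exact ⟨-k, by rw [hconjv]⟩
  let φ : Q → Q := Quotient.map f hresp
  have hφmk : ∀ v : V, φ (Quotient.mk s v) = Quotient.mk s (f v) := fun v => rfl
  have hφφ : ∀ q : Q, φ (φ q) = q := by
    intro q
    induction q using Quotient.inductionOn with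
    | h v => rw [hφmk, hφmk, hf]
  have hφ' : ∀ q : Q, φ q ≠ q := by
    intro q
    induction q using Quotient.inductionOn with
    | h v =>
      rw [hφmk]
      intro h
      obtain ⟨k, hk⟩ := Quotient.exact h
      apply key1 v (-k)
      conv_rhs => rw [hk]
      rw [happ]
      simp
  -- pair equivalence on Q
  let s2 : Setoid Q := ⟨fun q q' => q' = q ∨ q' = φ q, by
    constructor
    · exact fun q => Or.inl rfl
    · rintro a b (rfl | rfl)
      · exact Or.inl rfl
      · exact Or.inr (hφφ a).symm
    · rintro a b c (rfl | rfl) (h | h)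
      · exact Or.inl h
      · exact Or.inr h
      · exact Or.inr h
      · rw [h, hφφ]; exact Or.inl rfl⟩
  let p : Q → Prop := fun q => (Quotient.mk s2 q).out = q
  have hout : ∀ q : Q, (Quotient.mk s2 q).out = q ∨ (Quotient.mk s2 q).out = φ q := by
    intro q
    have := Quotient.exact ((Quotient.mk s2 q).out_eq)
    rcases this with h | h
    · exact Or.inl h.symm
    · have h3 := congrArg φ h
      rw [hφφ] at h3
      exact Or.inr h3.symm
  have hmk2 : ∀ q : Q, Quotient.mk s2 (φ q) = Quotient.mk s2 q :=
    fun q => Quotient.sound (Or.inr (hφφ q).symm)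
  have hp : ∀ q : Q, p (φ q) ↔ ¬ p q := by
    intro q
    show (Quotient.mk s2 (φ q)).out = φ q ↔ ¬ (Quotient.mk s2 q).out = q
    rw [hmk2]
    constructor
    · intro h1 h2
      exact hφ' q (h1.symm.trans h2)
    · intro h1
      rcases hout q with h | h
      · exact absurd h h1
      · exact h
  refine ⟨Finset.univ.filter (fun v => p (Quotient.mk s v)), ?_, ?_⟩
  · intro v
    simp only [Finset.mem_filter, Finset.mem_univ, true_and]
    rw [show Quotient.mk s (f v) = φ (Quotient.mk s v) from rfl, hp, not_not]
  · intro v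
    simp only [Finset.mem_filter, Finset.mem_univ, true_and]
    have hgv : Quotient.mk s (g v) = φ (Quotient.mk s v) := by
      rw [hφmk]
      have hrel : s.r (f v) (g v) := ⟨1, by rw [hgτf v, zpow_one]⟩
      exact (Quotient.sound hrel).symm
    rw [hgv, hp, not_not]

lemma matching_perm {V : Type*} [Fintype V] (F : SimpleGraph V)
    (h : ∃ M : F.Subgraph, M.IsPerfectMatching) :
    ∃ f : Equiv.Perm V, (∀ v, f (f v) = v) ∧ (∀ v, f v ≠ v) ∧ (∀ v, F.Adj v (f v)) := by
  obtain ⟨M, hM⟩ := h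
  have h3 : ∀ v : V, ∃! w, M.Adj v w := fun v => hM.1 (hM.2 v)
  choose w hw using h3
  have hw1 : ∀ v, M.Adj v (w v) := fun v => (hw v).1
  have hw2 : ∀ v y, M.Adj v y → y = w v := fun v => (hw v).2
  have hinv : Function.Involutive w := fun v => (hw2 (w v) v (hw1 v).symm).symm
  refine ⟨hinv.toPerm, hinv, ?_, fun v => M.adj_sub (hw1 v)⟩
  intro v hv
  have hadj : F.Adj v (w v) := M.adj_sub (hw1 v)
  have hv' : w v = v := hv
  rw [hv'] at hadj
  exact F.loopless.irrefl v hadj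

theorem stmt9 {V : Type*} [Fintype V] {n : ℕ} (hn : Fintype.card V = n)
    (heven : Even n) (F₁ F₂ : SimpleGraph V)
    (h1 : ∃ M : F₁.Subgraph, M.IsPerfectMatching)
    (h2 : ∃ M : F₂.Subgraph, M.IsPerfectMatching) :
    simDomNum ![F₁, F₂] ≤ n / 2 ∧
      (max (domNum F₁) (domNum F₂) = n / 2 → simDomNum ![F₁, F₂] = n / 2) := by
  classical
  obtain ⟨f, hf, hf', hfadj⟩ := matching_perm F₁ h1
  obtain ⟨g, hg, hg', hgadj⟩ := matching_perm F₂ h2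
  obtain ⟨S, hSf, hSg⟩ := exists_split f g hf hg hf' hg'
  have hcompl : Sᶜ = S.image f := by
    ext v
    simp only [Finset.mem_compl, Finset.mem_image]
    constructor
    · intro hv
      refine ⟨f v, ?_, hf v⟩
      by_contra hfv
      exact hv ((hSf v).mpr hfv)
    · rintro ⟨u, hu, rfl⟩ hfu
      exact (hSf u).mp hu hfu
  have hc2 : Sᶜ.card = S.card := by
    rw [hcompl]; exact Finset.card_image_of_injective _ f.injective
  have hc3 : S.card + Sᶜ.card = Fintype.card V := Finset.card_add_card_compl S
  have hcardS : S.card = n / 2 := by omega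
  have hdom : ∀ i : Fin 2, ∀ v ∉ S, ∃ u ∈ S, (![F₁, F₂] i).Adj v u := by
    intro i v hv
    fin_cases i
    · have hfv : f v ∈ S := by
        by_contra h; exact hv ((hSf v).mpr h)
      exact ⟨f v, hfv, by simpa using hfadj v⟩
    · have hgv : g v ∈ S := by
        by_contra h; exact hv ((hSg v).mpr h)
      exact ⟨g v, hgv, by simpa using hgadj v⟩
  have hmem : S.card ∈ {m | ∃ S : Finset V,
      (∀ i, ∀ v ∉ S, ∃ u ∈ S, (![F₁, F₂] i).Adj v u) ∧ S.card = m} := ⟨S, hdom, rfl⟩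
  have hle : simDomNum ![F₁, F₂] ≤ n / 2 := by
    rw [← hcardS]
    exact Nat.sInf_le hmem
  refine ⟨hle, fun hmax => le_antisymm hle ?_⟩
  obtain ⟨S', hS', hcard'⟩ := Nat.sInf_mem (⟨S.card, hmem⟩ : Set.Nonempty _)
  have hd1 : domNum F₁ ≤ simDomNum ![F₁, F₂] :=
    Nat.sInf_le ⟨S', fun v hv => by simpa using hS' 0 v hv, hcard'⟩
  have hd2 : domNum F₂ ≤ simDomNum ![F₁, F₂] :=
    Nat.sInf_le ⟨S', fun v hv => by simpa using hS' 1 v hv, hcard'⟩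
  rw [← hmax]
  exact max_le hd1 hd2
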